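/- Let ε > 0, let (W_t)_{t∈[−ε,0]} be a Brownian motion (with some fixed variance σ² > 0), and let (W''_t)_{t∈[−ε,0]} be an independent Brownian motion with W''_{−ε} ≥ W_{−ε}. Let W' be the reflection of W'' on W, i.e. W'_t = W''_t + sup_{−ε ≤ s ≤ t} (W_s − W''_s) for t ∈ [−ε,0] (when W''_{−ε} = W_{−ε}; more generally reflection starts at the first meeting time). Then P( W'₀ > W₀ ) = 1. -/

import Mathlib

open MeasureTheory ProbabilityTheory

/-- A process `W` is a Brownian motion on `[a, b]` with variance parameter `σ2` (under `P`):
measurable marginals, continuous paths on `[a, b]`, Gaussian increments with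
`Var(W_t − W_s) = σ2·(t − s)`, and independent increments. -/
def IsBrownianMotion {Ω : Type} [MeasurableSpace Ω] (P : Measure Ω) (σ2 : ℝ) (a b : ℝ)
    (W : ℝ → Ω → ℝ) : Prop :=
  (∀ t, Measurable (W t)) ∧
  (∀ ω, ContinuousOn (fun t => W t ω) (Set.Icc a b)) ∧
  (∀ s t : ℝ, a ≤ s → s ≤ t → t ≤ b →
    P.map (fun ω => W t ω - W s ω) = gaussianReal 0 (Real.toNNReal (σ2 * (t - s)))) ∧
  (∀ (n : ℕ) (t : Fin (n + 1) → ℝ), Monotone t → (∀ i, t i ∈ Set.Icc a b) →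
    iIndepFun
      (fun (i : Fin n) (ω : Ω) => W (t i.succ) ω - W (t i.castSucc) ω) P)


namespace Stmt17Aux

variable {Ω : Type} [MeasurableSpace Ω] {P : Measure Ω}

lemma incr_prod {σ2 a b : ℝ} {W : ℝ → Ω → ℝ} (hW : IsBrownianMotion P σ2 a b W)
    (t : ℕ → ℝ) (ht : Monotone t) (htm : ∀ n, t n ∈ Set.Icc a b)
    (S : Finset ℕ) (C : ℕ → Set Ω)
    (hC : ∀ n ∈ S, MeasurableSet[MeasurableSpace.comap
      (fun ω => W (t (n+1)) ω - W (t n) ω) inferInstance] (C n)) :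
    P (⋂ n ∈ S, C n) = ∏ n ∈ S, P (C n) := by
  classical
  set N : ℕ := S.sup id + 1 with hN
  have hlt : ∀ m ∈ S, m < N := fun m hm => Nat.lt_succ_of_le (Finset.le_sup (f := id) hm)
  have hmono : Monotone (fun i : Fin (N+1) => t i.val) := fun i j hij => ht hij
  have h4 := hW.2.2.2 N (fun i => t i.val) hmono (fun i => htm i.val)
  have key := h4.meas_biInter (S := S.attachFin hlt) (s := fun i : Fin N => C i.val)
    (fun i hi => hC i.val ((Finset.mem_attachFin hlt).1 hi))
  have hset : (⋂ i ∈ S.attachFin hlt, C i.val) = ⋂ n ∈ S, C n := by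
    ext ω
    simp only [Set.mem_iInter, Finset.mem_attachFin]
    exact ⟨fun h n hn => h ⟨n, hlt n hn⟩ hn, fun h i hi => h i.val hi⟩
  have hprod : (∏ i ∈ S.attachFin hlt, P (C i.val)) = ∏ n ∈ S, P (C n) := by
    refine Finset.prod_bij (fun (i : Fin N) _ => i.val)
      (fun i hi => (Finset.mem_attachFin hlt).1 hi)
      (fun i _ j _ h => Fin.val_injective h)
      (fun n hn => ⟨⟨n, hlt n hn⟩, (Finset.mem_attachFin hlt).2 hn, rfl⟩)
      (fun i _ => rfl)
  rw [hset, hprod] at key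
  exact key

/-- The σ-algebras generated by the pair of increments (of `W` and `W''`) over
`[t n, t (n+1)]` form an independent family. -/
lemma sa_iIndep {σ2 a b : ℝ} {W W'' : ℝ → Ω → ℝ} [IsProbabilityMeasure P]
    (hW : IsBrownianMotion P σ2 a b W) (hW'' : IsBrownianMotion P σ2 a b W'')
    (hindep : ProbabilityTheory.IndepFun
      (fun ω => fun t : ℝ => W t ω) (fun ω => fun t : ℝ => W'' t ω) P)
    (t : ℕ → ℝ) (ht : Monotone t) (htm : ∀ n, t n ∈ Set.Icc a b) :
    iIndep (fun n : ℕ =>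
      MeasurableSpace.comap (fun ω => W (t (n+1)) ω - W (t n) ω) inferInstance ⊔
      MeasurableSpace.comap (fun ω => W'' (t (n+1)) ω - W'' (t n) ω) inferInstance) P := by
  classical
  set ΔW : ℕ → Ω → ℝ := fun n ω => W (t (n+1)) ω - W (t n) ω with hΔW
  set ΔW'' : ℕ → Ω → ℝ := fun n ω => W'' (t (n+1)) ω - W'' (t n) ω with hΔW''
  have hΔWm : ∀ n, Measurable (ΔW n) := fun n => (hW.1 _).sub (hW.1 _)
  have hΔW''m : ∀ n, Measurable (ΔW'' n) := fun n => (hW''.1 _).sub (hW''.1 _)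
  set π : ℕ → Set (Set Ω) := fun n =>
    {A | ∃ C D : Set ℝ, MeasurableSet C ∧ MeasurableSet D ∧
      A = ΔW n ⁻¹' C ∩ ΔW'' n ⁻¹' D} with hπ
  refine iIndepSets.iIndep ?h_le π ?h_pi ?h_gen ?h_ind
  case h_le =>
    intro n
    exact sup_le (measurable_iff_comap_le.1 (hΔWm n)) (measurable_iff_comap_le.1 (hΔW''m n))
  case h_pi =>
    rintro n A ⟨C1, D1, hC1, hD1, rfl⟩ B ⟨C2, D2, hC2, hD2, rfl⟩ -
    refine ⟨C1 ∩ C2, D1 ∩ D2, hC1.inter hC2, hD1.inter hD2, ?_⟩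
    ext ω
    simp only [Set.mem_inter_iff, Set.mem_preimage]
    tauto
  case h_gen =>
    intro n
    refine le_antisymm (sup_le ?_ ?_) (MeasurableSpace.generateFrom_le ?_)
    · rintro A ⟨C, hC, rfl⟩
      exact MeasurableSpace.measurableSet_generateFrom
        ⟨C, Set.univ, hC, MeasurableSet.univ, by simp; rfl⟩
    · rintro A ⟨D, hD, rfl⟩
      exact MeasurableSpace.measurableSet_generateFrom
        ⟨Set.univ, D, MeasurableSet.univ, hD, by simp; rfl⟩
    · rintro A ⟨C, D, hC, hD, rfl⟩
      exact MeasurableSet.inter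
        ((le_sup_left :
          MeasurableSpace.comap (ΔW n) inferInstance ≤ _) _ ⟨C, hC, rfl⟩)
        ((le_sup_right :
          MeasurableSpace.comap (ΔW'' n) inferInstance ≤ _) _ ⟨D, hD, rfl⟩)
  case h_ind =>
    rw [iIndepSets_iff]
    intro S f hf
    choose! C D hC hD hfeq using hf
    have hφ : ∀ n : ℕ, Measurable (fun g : ℝ → ℝ => g (t (n+1)) - g (t n)) :=
      fun n => (measurable_pi_apply _).sub (measurable_pi_apply _)
    have hsplit : (⋂ i ∈ S, f i) = (⋂ i ∈ S, ΔW i ⁻¹' C i) ∩ (⋂ i ∈ S, ΔW'' i ⁻¹' D i) := by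
      ext ω
      simp only [Set.mem_iInter, Set.mem_inter_iff]
      constructor
      · intro h
        refine ⟨fun i hi => ?_, fun i hi => ?_⟩ <;>
        · have h2 := h i hi
          rw [hfeq i hi] at h2
          simp only [Set.mem_inter_iff, Set.mem_preimage] at h2
          first
          | exact h2.1
          | exact h2.2
      · rintro ⟨h1, h2⟩ i hi
        rw [hfeq i hi]
        exact ⟨h1 i hi, h2 i hi⟩
    have hL : (⋂ i ∈ S, ΔW i ⁻¹' C i) =
        (fun ω => fun s : ℝ => W s ω) ⁻¹' (⋂ i ∈ S, (fun g : ℝ → ℝ => g (t (i+1)) - g (t i)) ⁻¹' C i) := by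
      rw [Set.preimage_iInter₂]
      rfl
    have hR : (⋂ i ∈ S, ΔW'' i ⁻¹' D i) =
        (fun ω => fun s : ℝ => W'' s ω) ⁻¹' (⋂ i ∈ S, (fun g : ℝ → ℝ => g (t (i+1)) - g (t i)) ⁻¹' D i) := by
      rw [Set.preimage_iInter₂]
      rfl
    have hLmeas : MeasurableSet (⋂ i ∈ S, (fun g : ℝ → ℝ => g (t (i+1)) - g (t i)) ⁻¹' C i) :=
      MeasurableSet.biInter S.countable_toSet (fun i hi => hφ i (hC i hi))
    have hRmeas : MeasurableSet (⋂ i ∈ S, (fun g : ℝ → ℝ => g (t (i+1)) - g (t i)) ⁻¹' D i) :=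
      MeasurableSet.biInter S.countable_toSet (fun i hi => hφ i (hD i hi))
    have hmul : P ((⋂ i ∈ S, ΔW i ⁻¹' C i) ∩ (⋂ i ∈ S, ΔW'' i ⁻¹' D i))
        = P (⋂ i ∈ S, ΔW i ⁻¹' C i) * P (⋂ i ∈ S, ΔW'' i ⁻¹' D i) := by
      rw [hL, hR]
      exact hindep.measure_inter_preimage_eq_mul _ _ hLmeas hRmeas
    have hPL : P (⋂ i ∈ S, ΔW i ⁻¹' C i) = ∏ i ∈ S, P (ΔW i ⁻¹' C i) :=
      incr_prod hW t ht htm S _ (fun n hn => ⟨C n, hC n hn, rfl⟩)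
    have hPR : P (⋂ i ∈ S, ΔW'' i ⁻¹' D i) = ∏ i ∈ S, P (ΔW'' i ⁻¹' D i) :=
      incr_prod hW'' t ht htm S _ (fun n hn => ⟨D n, hD n hn, rfl⟩)
    have hterm : ∀ i ∈ S, P (f i) = P (ΔW i ⁻¹' C i) * P (ΔW'' i ⁻¹' D i) := by
      intro i hi
      rw [hfeq i hi]
      exact (hindep.comp (hφ i) (hφ i)).measure_inter_preimage_eq_mul _ _ (hC i hi) (hD i hi)
    calc P (⋂ i ∈ S, f i) = P ((⋂ i ∈ S, ΔW i ⁻¹' C i) ∩ (⋂ i ∈ S, ΔW'' i ⁻¹' D i)) := by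
          rw [hsplit]
      _ = (∏ i ∈ S, P (ΔW i ⁻¹' C i)) * ∏ i ∈ S, P (ΔW'' i ⁻¹' D i) := by
          rw [hmul, hPL, hPR]
      _ = ∏ i ∈ S, P (ΔW i ⁻¹' C i) * P (ΔW'' i ⁻¹' D i) := (Finset.prod_mul_distrib).symm
      _ = ∏ i ∈ S, P (f i) := Finset.prod_congr rfl (fun i hi => (hterm i hi).symm)

lemma diag_null [IsProbabilityMeasure P] {X Y : Ω → ℝ} (hXm : Measurable X) (hYm : Measurable Y)
    (hXY : IndepFun X Y P) {v : NNReal} (hv : v ≠ 0)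
    (hmapY : P.map Y = gaussianReal 0 v) :
    P {ω | X ω = Y ω} = 0 := by
  have hpair : P.map (fun ω => (X ω, Y ω)) = (P.map X).prod (P.map Y) :=
    (indepFun_iff_map_prod_eq_prod_map_map hXm.aemeasurable hYm.aemeasurable).1 hXY
  have hdiag : MeasurableSet {p : ℝ × ℝ | p.1 = p.2} :=
    measurableSet_eq_fun measurable_fst measurable_snd
  have hset : {ω | X ω = Y ω} = (fun ω => (X ω, Y ω)) ⁻¹' {p : ℝ × ℝ | p.1 = p.2} := rfl
  haveI : IsProbabilityMeasure (P.map Y) := Measure.isProbabilityMeasure_map hYm.aemeasurable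
  haveI : IsProbabilityMeasure (P.map X) := Measure.isProbabilityMeasure_map hXm.aemeasurable
  rw [hset, ← Measure.map_apply (hXm.prodMk hYm) hdiag, hpair,
    Measure.prod_apply hdiag]
  have hz : ∀ x : ℝ, (P.map Y) (Prod.mk x ⁻¹' {p : ℝ × ℝ | p.1 = p.2}) = 0 := by
    intro x
    have : (Prod.mk x ⁻¹' {p : ℝ × ℝ | p.1 = p.2}) = {x} := by
      ext y; simp [eq_comm]
    rw [this, hmapY]
    exact gaussianReal_absolutelyContinuous 0 hv (measure_singleton x)
  have hz' : ∀ x : ℝ, (P.map Y) ({x} : Set ℝ) = 0 := fun x => by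
    rw [hmapY]; exact gaussianReal_absolutelyContinuous 0 hv (measure_singleton x)
  simp [hz']

lemma half_bound {σ2 a b : ℝ} {W W'' : ℝ → Ω → ℝ} [IsProbabilityMeasure P] (hσ2 : 0 < σ2)
    (hW : IsBrownianMotion P σ2 a b W) (hW'' : IsBrownianMotion P σ2 a b W'')
    (hindep : ProbabilityTheory.IndepFun
      (fun ω => fun t : ℝ => W t ω) (fun ω => fun t : ℝ => W'' t ω) P)
    (s1 s2 : ℝ) (h1 : a ≤ s1) (h12 : s1 < s2) (h2b : s2 ≤ b) :
    P {ω | 0 ≤ (W b ω - W'' b ω) - (W s1 ω - W'' s1 ω) ∧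
           0 ≤ (W b ω - W'' b ω) - (W s2 ω - W'' s2 ω)} ≤ 1/2 := by
  classical
  set X1 : Ω → ℝ := fun ω => W s2 ω - W s1 ω with hX1
  set X2 : Ω → ℝ := fun ω => W b ω - W s2 ω with hX2
  set Y1 : Ω → ℝ := fun ω => W'' s2 ω - W'' s1 ω with hY1
  set Y2 : Ω → ℝ := fun ω => W'' b ω - W'' s2 ω with hY2
  have hX1m : Measurable X1 := (hW.1 _).sub (hW.1 _)
  have hX2m : Measurable X2 := (hW.1 _).sub (hW.1 _)
  have hY1m : Measurable Y1 := (hW''.1 _).sub (hW''.1 _)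
  have hY2m : Measurable Y2 := (hW''.1 _).sub (hW''.1 _)
  have ha2 : a ≤ s2 := h1.trans h12.le
  -- the grid s1 < s2 < b
  set g : Fin 3 → ℝ := ![s1, s2, b] with hg
  have hgmono : Monotone g := by
    refine Fin.monotone_iff_le_succ.2 ?_
    intro i
    fin_cases i <;> simp [hg] <;> linarith
  have hgmem : ∀ i, g i ∈ Set.Icc a b := by
    intro i
    rw [Set.mem_Icc]
    fin_cases i <;> constructor <;> simp [hg] <;> linarith
  have h4 := hW.2.2.2 2 g hgmono hgmem
  have h4'' := hW''.2.2.2 2 g hgmono hgmem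
  have hX12 : IndepFun X1 X2 P := by
    have := h4.indepFun (i := 0) (j := 1) (by decide)
    simpa [hg, hX1, hX2] using this
  have hY12 : IndepFun Y1 Y2 P := by
    have := h4''.indepFun (i := 0) (j := 1) (by decide)
    simpa [hg, hY1, hY2] using this
  set v1 : NNReal := (σ2 * (s2 - s1)).toNNReal with hv1
  set v2 : NNReal := (σ2 * (b - s2)).toNNReal with hv2
  have hmapX1 : P.map X1 = gaussianReal 0 v1 := hW.2.2.1 s1 s2 h1 h12.le h2b
  have hmapX2 : P.map X2 = gaussianReal 0 v2 := hW.2.2.1 s2 b ha2 h2b le_rfl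
  have hmapY1 : P.map Y1 = gaussianReal 0 v1 := hW''.2.2.1 s1 s2 h1 h12.le h2b
  have hmapY2 : P.map Y2 = gaussianReal 0 v2 := hW''.2.2.1 s2 b ha2 h2b le_rfl
  have hpairX : P.map (fun ω => (X1 ω, X2 ω)) = (gaussianReal 0 v1).prod (gaussianReal 0 v2) := by
    rw [← hmapX1, ← hmapX2]
    exact (indepFun_iff_map_prod_eq_prod_map_map hX1m.aemeasurable hX2m.aemeasurable).1 hX12
  have hpairY : P.map (fun ω => (Y1 ω, Y2 ω)) = (gaussianReal 0 v1).prod (gaussianReal 0 v2) := by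
    rw [← hmapY1, ← hmapY2]
    exact (indepFun_iff_map_prod_eq_prod_map_map hY1m.aemeasurable hY2m.aemeasurable).1 hY12
  have hφm : Measurable (fun gg : ℝ → ℝ => (gg s2 - gg s1, gg b - gg s2)) := by
    apply Measurable.prodMk <;> exact (measurable_pi_apply _).sub (measurable_pi_apply _)
  have hZindep : IndepFun (fun ω => (X1 ω, X2 ω)) (fun ω => (Y1 ω, Y2 ω)) P :=
    hindep.comp hφm hφm
  have hXm : Measurable (fun ω => (X1 ω, X2 ω)) := hX1m.prodMk hX2m
  have hYm : Measurable (fun ω => (Y1 ω, Y2 ω)) := hY1m.prodMk hY2m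
  have hZ0 : P.map (fun ω => ((X1 ω, X2 ω), (Y1 ω, Y2 ω)))
      = (P.map (fun ω => (X1 ω, X2 ω))).prod (P.map (fun ω => (Y1 ω, Y2 ω))) :=
    (indepFun_iff_map_prod_eq_prod_map_map hXm.aemeasurable hYm.aemeasurable).1 hZindep
  have hZ0' : P.map (fun ω => ((Y1 ω, Y2 ω), (X1 ω, X2 ω)))
      = (P.map (fun ω => (Y1 ω, Y2 ω))).prod (P.map (fun ω => (X1 ω, X2 ω))) :=
    (indepFun_iff_map_prod_eq_prod_map_map hYm.aemeasurable hXm.aemeasurable).1 hZindep.symm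
  have hZZ' : P.map (fun ω => ((X1 ω, X2 ω), (Y1 ω, Y2 ω)))
      = P.map (fun ω => ((Y1 ω, Y2 ω), (X1 ω, X2 ω))) := by
    rw [hZ0, hZ0', hpairX, hpairY]
  set Q : Set ((ℝ × ℝ) × ℝ × ℝ) :=
    {p | 0 ≤ p.1.1 + p.1.2 - (p.2.1 + p.2.2) ∧ 0 ≤ p.1.2 - p.2.2} with hQ
  have hQmeas : MeasurableSet Q := by
    apply MeasurableSet.inter
    · exact measurableSet_le measurable_const
        (((measurable_fst.fst.add measurable_fst.snd).sub
          (measurable_snd.fst.add measurable_snd.snd)))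
    · exact measurableSet_le measurable_const (measurable_fst.snd.sub measurable_snd.snd)
  set G : Set Ω := {ω | 0 ≤ (W b ω - W'' b ω) - (W s1 ω - W'' s1 ω) ∧
           0 ≤ (W b ω - W'' b ω) - (W s2 ω - W'' s2 ω)} with hGdef
  set G' : Set Ω := {ω | (W b ω - W'' b ω) - (W s1 ω - W'' s1 ω) ≤ 0 ∧
           (W b ω - W'' b ω) - (W s2 ω - W'' s2 ω) ≤ 0} with hG'def
  have hGeq : G = (fun ω => ((X1 ω, X2 ω), (Y1 ω, Y2 ω))) ⁻¹' Q := by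
    ext ω
    simp only [hGdef, hQ, Set.mem_setOf_eq, Set.mem_preimage, hX1, hX2, hY1, hY2]
    constructor <;> rintro ⟨u, v⟩ <;> constructor <;> linarith
  have hG'eq : G' = (fun ω => ((Y1 ω, Y2 ω), (X1 ω, X2 ω))) ⁻¹' Q := by
    ext ω
    simp only [hG'def, hQ, Set.mem_setOf_eq, Set.mem_preimage, hX1, hX2, hY1, hY2]
    constructor <;> rintro ⟨u, v⟩ <;> constructor <;> linarith
  have hsym : P G = P G' := by
    rw [hGeq, hG'eq, ← Measure.map_apply (hXm.prodMk hYm) hQmeas,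
      ← Measure.map_apply (hYm.prodMk hXm) hQmeas, hZZ']
  have hGmeas : MeasurableSet G := by
    rw [hGeq]; exact (hXm.prodMk hYm) hQmeas
  have hG'meas : MeasurableSet G' := by
    rw [hG'eq]; exact (hYm.prodMk hXm) hQmeas
  have hv1ne : v1 ≠ 0 := by
    rw [hv1]
    simp only [ne_eq, Real.toNNReal_eq_zero, not_le]
    nlinarith
  have hX1Y1indep : IndepFun X1 Y1 P :=
    hindep.comp ((measurable_pi_apply s2).sub (measurable_pi_apply s1))
      ((measurable_pi_apply s2).sub (measurable_pi_apply s1))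
  have hnull : P (G ∩ G') = 0 := by
    have hsub : G ∩ G' ⊆ {ω | X1 ω = Y1 ω} := by
      rintro ω ⟨⟨h1a, h2a⟩, h1b, h2b⟩
      simp only [Set.mem_setOf_eq, hX1, hY1]
      linarith
    exact measure_mono_null hsub (diag_null hX1m hY1m hX1Y1indep hv1ne hmapY1)
  have hle1 : P G + P G ≤ 1 := by
    calc P G + P G = P G + P G' := by rw [hsym]
      _ = P (G ∪ G') + P (G ∩ G') := (measure_union_add_inter G hG'meas).symm
      _ = P (G ∪ G') := by rw [hnull, add_zero]
      _ ≤ 1 := prob_le_one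
  refine (ENNReal.le_div_iff_mul_le (Or.inl two_ne_zero) (Or.inl ENNReal.ofNat_ne_top)).2 ?_
  rw [mul_two]
  exact hle1

end Stmt17Aux

/-- If `W''` is a Brownian motion independent of the Brownian motion `W` on `[−ε, 0]`, with
`W''_{−ε} ≥ W_{−ε}`, and `W'` is the reflection of `W''` on the barrier `W`
(`W'_t = W''_t + max(sup_{−ε ≤ s ≤ t}(W_s − W''_s), 0)`, which equals `W''` before the first
meeting time and the reflected motion afterwards), then `P(W'₀ > W₀) = 1`. -/
theorem stmt17 (σ2 ε : ℝ) (hσ2 : 0 < σ2) (hε : 0 < ε)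
    (Ω : Type) [MeasurableSpace Ω] (P : Measure Ω) [IsProbabilityMeasure P]
    (W W'' W' : ℝ → Ω → ℝ)
    (hW : IsBrownianMotion P σ2 (-ε) 0 W)
    (hW'' : IsBrownianMotion P σ2 (-ε) 0 W'')
    (hindep : ProbabilityTheory.IndepFun
      (fun ω => fun t : ℝ => W t ω) (fun ω => fun t : ℝ => W'' t ω) P)
    (hstart : ∀ᵐ ω ∂P, W (-ε) ω ≤ W'' (-ε) ω)
    (hW' : ∀ t ∈ Set.Icc (-ε) (0 : ℝ), ∀ ω,
      W' t ω = W'' t ω + max (sSup ((fun s => W s ω - W'' s ω) '' Set.Icc (-ε) t)) 0) :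
    P {ω | W 0 ω < W' 0 ω} = 1 := by
  classical
  -- the geometric sequence of times increasing to `0`
  set t : ℕ → ℝ := fun n => -(ε * (2⁻¹ : ℝ) ^ n) with htdef
  have hpowpos : ∀ n : ℕ, (0:ℝ) < (2⁻¹ : ℝ) ^ n := fun n => pow_pos (by norm_num) n
  have htneg : ∀ n, t n < 0 := fun n => neg_lt_zero.2 (mul_pos hε (hpowpos n))
  have htmem : ∀ n, t n ∈ Set.Icc (-ε) 0 := by
    intro n
    constructor
    · have h1 : (2⁻¹ : ℝ) ^ n ≤ 1 := pow_le_one₀ (by norm_num) (by norm_num)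
      have := mul_le_of_le_one_right hε.le h1
      simp only [htdef]
      linarith
    · exact (htneg n).le
  have htstep : ∀ n, t n < t (n + 1) := by
    intro n
    have h1 : ((2:ℝ)⁻¹) ^ (n+1) = (2⁻¹:ℝ) ^ n * 2⁻¹ := pow_succ _ n
    have h2 := hpowpos n
    simp only [htdef]
    nlinarith
  have htmono : Monotone t := monotone_nat_of_le_succ (fun n => (htstep n).le)
  have htlim : Filter.Tendsto t Filter.atTop (nhds 0) := by
    have h2 : Filter.Tendsto (fun n => (2⁻¹ : ℝ) ^ n) Filter.atTop (nhds 0) :=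
      tendsto_pow_atTop_nhds_zero_of_lt_one (by norm_num) (by norm_num)
    have h3 := (h2.const_mul ε).neg
    have h4 : -(ε * (0:ℝ)) = 0 := by ring
    rw [h4] at h3
    exact h3
  -- the difference process at grid points
  set V : ℕ → Ω → ℝ := fun k ω => (W 0 ω - W'' 0 ω) - (W (t k) ω - W'' (t k) ω) with hVdef
  have hVmeas : ∀ k, Measurable (V k) :=
    fun k => ((hW.1 0).sub (hW''.1 0)).sub ((hW.1 (t k)).sub (hW''.1 (t k)))
  set A : ℕ → Set Ω := fun k => {ω | 0 ≤ V k ω} with hAdef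
  have hAmeas : ∀ k, MeasurableSet (A k) := fun k => measurableSet_le measurable_const (hVmeas k)
  -- the σ-algebras of increments at each scale
  set sa : ℕ → MeasurableSpace Ω := fun n =>
    MeasurableSpace.comap (fun ω => W (t (n+1)) ω - W (t n) ω) inferInstance ⊔
    MeasurableSpace.comap (fun ω => W'' (t (n+1)) ω - W'' (t n) ω) inferInstance with hsadef
  have hsa_le : ∀ n, sa n ≤ ‹MeasurableSpace Ω› := by
    intro n
    exact sup_le (measurable_iff_comap_le.1 ((hW.1 _).sub (hW.1 _)))
      (measurable_iff_comap_le.1 ((hW''.1 _).sub (hW''.1 _)))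
  have hiIndep : iIndep sa P := Stmt17Aux.sa_iIndep hW hW'' hindep t htmono htmem
  -- `V k` is measurable with respect to the increments at scales `≥ j` for `j ≤ k`
  have hVtail : ∀ j k : ℕ, j ≤ k → Measurable[⨆ m, ⨆ (_ : j ≤ m), sa m] (V k) := by
    intro j k hjk
    set M : MeasurableSpace Ω := ⨆ m, ⨆ (_ : j ≤ m), sa m with hM
    set ps : ℕ → Ω → ℝ := fun N ω => ∑ m ∈ Finset.Ico k N,
      ((W (t (m+1)) ω - W (t m) ω) - (W'' (t (m+1)) ω - W'' (t m) ω)) with hps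
    have hpsm : ∀ N, Measurable[M] (ps N) := by
      intro N
      refine Finset.measurable_sum _ (fun m hm => ?_)
      have hmk : j ≤ m := hjk.trans (Finset.mem_Ico.1 hm).1
      have h1 : Measurable[sa m] (fun ω => W (t (m+1)) ω - W (t m) ω) :=
        measurable_iff_comap_le.2 le_sup_left
      have h2 : Measurable[sa m] (fun ω => W'' (t (m+1)) ω - W'' (t m) ω) :=
        measurable_iff_comap_le.2 le_sup_right
      exact ((h1.sub h2).mono (le_iSup₂ (f := fun m _ => sa m) m hmk) le_rfl)
    have htele : ∀ ω, ∀ N, k ≤ N →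
        ps N ω = (W (t N) ω - W (t k) ω) - (W'' (t N) ω - W'' (t k) ω) := by
      intro ω
      refine Nat.le_induction ?_ ?_
      · simp [hps]
      · intro N hkN ih
        rw [hps]
        simp only
        rw [Finset.sum_Ico_succ_top hkN]
        rw [hps] at ih
        simp only at ih
        rw [ih]
        ring
    have hlimpt : Filter.Tendsto ps Filter.atTop (nhds (V k)) := by
      rw [tendsto_pi_nhds]
      intro ω
      have h0mem : (0:ℝ) ∈ Set.Icc (-ε) (0:ℝ) := ⟨by linarith, le_rfl⟩
      have htin : Filter.Tendsto t Filter.atTop (nhdsWithin 0 (Set.Icc (-ε) 0)) :=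
        tendsto_nhdsWithin_iff.2 ⟨htlim, Filter.Eventually.of_forall htmem⟩
      have hWlim : Filter.Tendsto (fun N => W (t N) ω) Filter.atTop (nhds (W 0 ω)) :=
        (hW.2.1 ω 0 h0mem).tendsto.comp htin
      have hW''lim : Filter.Tendsto (fun N => W'' (t N) ω) Filter.atTop (nhds (W'' 0 ω)) :=
        (hW''.2.1 ω 0 h0mem).tendsto.comp htin
      have hmain0 : Filter.Tendsto
          (fun N => (W (t N) ω - W (t k) ω) - (W'' (t N) ω - W'' (t k) ω)) Filter.atTop
          (nhds ((W 0 ω - W (t k) ω) - (W'' 0 ω - W'' (t k) ω))) :=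
        (hWlim.sub tendsto_const_nhds).sub (hW''lim.sub tendsto_const_nhds)
      have heq : (W 0 ω - W (t k) ω) - (W'' 0 ω - W'' (t k) ω) = V k ω := by
        simp only [hVdef]; ring
      have hmain : Filter.Tendsto
          (fun N => (W (t N) ω - W (t k) ω) - (W'' (t N) ω - W'' (t k) ω)) Filter.atTop
          (nhds (V k ω)) := by rwa [heq] at hmain0
      refine hmain.congr' ?_
      filter_upwards [Filter.eventually_ge_atTop k] with N hN
      exact (htele ω N hN).symm
    exact @measurable_of_tendsto_metrizable Ω ℝ M _ _ _ _ ps (V k) hpsm hlimpt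
  -- the tail event
  set T : Set Ω := ⋃ n, ⋂ k, ⋂ (_ : n ≤ k), A k with hTdef
  have hTamb : MeasurableSet T :=
    MeasurableSet.iUnion fun n => MeasurableSet.iInter fun k =>
      MeasurableSet.iInter fun _ => hAmeas k
  have htail : MeasurableSet[Filter.limsup sa Filter.atTop] T := by
    rw [Filter.limsup_eq_iInf_iSup_of_nat, MeasurableSpace.measurableSet_iInf]
    intro j
    have hTeq : T = ⋃ n, ⋃ (_ : j ≤ n), ⋂ k, ⋂ (_ : n ≤ k), A k := by
      ext ω
      simp only [hTdef, Set.mem_iUnion, Set.mem_iInter]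
      constructor
      · rintro ⟨n, hn⟩
        exact ⟨max n j, le_max_right _ _, fun k hk => hn k ((le_max_left n j).trans hk)⟩
      · rintro ⟨n, _, hn⟩
        exact ⟨n, hn⟩
    rw [hTeq]
    refine MeasurableSet.iUnion fun n => MeasurableSet.iUnion fun hjn =>
      MeasurableSet.iInter fun k => MeasurableSet.iInter fun hnk => ?_
    have : Measurable[⨆ m, ⨆ (_ : j ≤ m), sa m] (V k) := hVtail j k (hjn.trans hnk)
    exact this measurableSet_Ici
  have h01 := measure_zero_or_one_of_measurableSet_limsup_atTop hsa_le hiIndep htail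
  -- probability bound via the reflection symmetry
  have hTn : ∀ n, P (⋂ k, ⋂ (_ : n ≤ k), A k) ≤ 1/2 := by
    intro n
    have hhalf := Stmt17Aux.half_bound hσ2 hW hW'' hindep (t n) (t (n+1))
      ((htmem n).1) (htstep n) ((htmem (n+1)).2)
    refine le_trans (measure_mono ?_) hhalf
    intro ω hω
    simp only [Set.mem_iInter] at hω
    have h1 := hω n le_rfl
    have h2 := hω (n+1) (Nat.le_succ n)
    simp only [hAdef, hVdef, Set.mem_setOf_eq] at h1 h2
    exact ⟨by linarith, by linarith⟩
  have hTle : P T ≤ 1/2 := by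
    have hmono : Monotone (fun n => ⋂ k, ⋂ (_ : n ≤ k), A k) := by
      intro n m hnm ω hω
      simp only [Set.mem_iInter] at hω ⊢
      exact fun k hk => hω k (hnm.trans hk)
    rw [hTdef, (hmono.directed_le).measure_iUnion]
    exact iSup_le hTn
  have hT0 : P T = 0 := by
    rcases h01 with h | h
    · exact h
    · exfalso
      rw [h] at hTle
      norm_num at hTle
  -- the complement of the tail event is contained in the success event
  have hsubset : Tᶜ ⊆ {ω | W 0 ω < W' 0 ω} := by
    intro ω hω
    by_contra hlt
    apply hω
    refine Set.mem_iUnion.2 ⟨0, ?_⟩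
    simp only [Set.mem_iInter]
    intro k _
    simp only [Set.mem_setOf_eq, not_lt] at hlt
    have h0mem : (0:ℝ) ∈ Set.Icc (-ε) (0:ℝ) := ⟨by linarith, le_rfl⟩
    have hW'0 := hW' 0 h0mem ω
    have hbdd : BddAbove ((fun s => W s ω - W'' s ω) '' Set.Icc (-ε) 0) :=
      isCompact_Icc.bddAbove_image ((hW.2.1 ω).sub (hW''.2.1 ω))
    have hle : W (t k) ω - W'' (t k) ω ≤
        sSup ((fun s => W s ω - W'' s ω) '' Set.Icc (-ε) 0) :=
      le_csSup hbdd ⟨t k, htmem k, rfl⟩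
    rw [hW'0] at hlt
    have hmax : max (sSup ((fun s => W s ω - W'' s ω) '' Set.Icc (-ε) 0)) 0
        ≤ W 0 ω - W'' 0 ω := by linarith
    have hfin := hle.trans ((le_max_left _ 0).trans hmax)
    show (0:ℝ) ≤ V k ω
    simp only [hVdef]
    linarith
  refine le_antisymm prob_le_one ?_
  calc (1:ENNReal) = P Tᶜ := by rw [prob_compl_eq_one_sub hTamb, hT0, tsub_zero]
    _ ≤ P {ω | W 0 ω < W' 0 ω} := measure_mono hsubset
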